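/- arXiv:1410.6956 — 3 statements merged into one kernel-verified Lean document; each statement's English description precedes it below -/
import Mathlib

section
/- Let W̄ := E[W] where W is a random N×N matrix with nonnegative entries satisfying W𝟏 = 𝟏 almost surely, and assume the spectral radius of E[WᵀJ⊥W] is strictly smaller than 1. Then the vector v ∈ ℝ^N defined by vᵀ := (1/N)𝟏ᵀ W̄ (I_N − J⊥ W̄)^{−1} is the unique vector with nonnegative entries satisfying vᵀ = vᵀ W̄ and vᵀ𝟏 = 1. -/
open MeasureTheory ProbabilityTheory Filter Matrix Set
open scoped Kronecker Topology ENNReal NNReal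

noncomputable section

namespace DistSA

instance matMS {m n : Type*} : MeasurableSpace (Matrix m n ℝ) := by
  unfold Matrix; infer_instance

/-- The vector space `ℝ^{dN}`, coordinates indexed by pairs `(i, j)` where `i` is the agent. -/
abbrev EVec (N d : ℕ) := Fin N × Fin d → ℝ

/-- Euclidean norm on a finite product of copies of `ℝ`. -/
def enorm {ι : Type*} [Fintype ι] (x : ι → ℝ) : ℝ := Real.sqrt (∑ i, (x i) ^ 2)

/-- Spectral (operator) norm with respect to the Euclidean norm. -/
def specNorm {ι : Type*} [Fintype ι] (A : Matrix ι ι ℝ) : ℝ :=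
  sInf {c | 0 ≤ c ∧ ∀ x : ι → ℝ, enorm (A.mulVec x) ≤ c * enorm x}

/-- Spectral radius of a real matrix: largest modulus of a complex eigenvalue. -/
def specRad {ι : Type*} [Fintype ι] [DecidableEq ι] (A : Matrix ι ι ℝ) : ℝ :=
  sSup ((fun z : ℂ => ‖z‖) '' spectrum ℂ (A.map (algebraMap ℝ ℂ)))

variable (N d : ℕ)

/-- `J = (1/N) 𝟏𝟏ᵀ`, the orthogonal projector onto the span of the all-one vector. -/
def Jmat : Matrix (Fin N) (Fin N) ℝ := Matrix.of fun _ _ => (N : ℝ)⁻¹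

/-- `J⊥ = I_N - J`. -/
def Jperp : Matrix (Fin N) (Fin N) ℝ := 1 - Jmat N

/-- `w ⊗ I_d`, acting on `ℝ^{dN}`. -/
def Kro (w : Matrix (Fin N) (Fin N) ℝ) : Matrix (Fin N × Fin d) (Fin N × Fin d) ℝ :=
  w ⊗ₖ (1 : Matrix (Fin d) (Fin d) ℝ)

/-- `𝒥⊥ = J⊥ ⊗ I_d`. -/
def Jperpb : Matrix (Fin N × Fin d) (Fin N × Fin d) ℝ := Kro N d (Jperp N)

/-- `𝒥 = J ⊗ I_d`. -/
def Jb : Matrix (Fin N × Fin d) (Fin N × Fin d) ℝ := Kro N d (Jmat N)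

/-- `⟨x⟩ = (1/N)(𝟏ᵀ ⊗ I_d) x = (x₁ + ⋯ + x_N)/N`. -/
def avg (x : EVec N d) : Fin d → ℝ := fun j => (N : ℝ)⁻¹ * ∑ i, x (i, j)

/-- `𝟏 ⊗ ϑ`, the consensus vector with common value `ϑ`. -/
def emb (ϑ : Fin d → ℝ) : EVec N d := fun p => ϑ p.2

/-- Row-stochastic matrices: nonnegative entries, rows summing to 1. -/
def RowStochastic (w : Matrix (Fin N) (Fin N) ℝ) : Prop :=
  (∀ i j, 0 ≤ w i j) ∧ ∀ i, ∑ j, w i j = 1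

/-! ### Auxiliary lemmas -/

section Aux

open scoped Matrix.Norms.L2Operator

instance matCStar {n : ℕ} : CStarAlgebra (Matrix (Fin n) (Fin n) ℂ) where

lemma opNorm_le_of_sq {n : ℕ} (A : Matrix (Fin n) (Fin n) ℝ) {s : ℝ} (hs : 0 ≤ s)
    (h : ∀ x : Fin n → ℝ, ∑ k, (A.mulVec x k)^2 ≤ s^2 * ∑ k, (x k)^2) : ‖A‖ ≤ s := by
  rw [Matrix.cstar_norm_def]
  refine ContinuousLinearMap.opNorm_le_bound _ hs fun x => ?_
  have hx : ∀ k, Matrix.toEuclideanCLM (𝕜 := ℝ) A x k = A.mulVec (fun i => x i) k :=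
    fun k => rfl
  rw [EuclideanSpace.norm_eq, EuclideanSpace.norm_eq]
  simp only [hx, Real.norm_eq_abs, sq_abs]
  calc Real.sqrt (∑ k, A.mulVec (fun i => x i) k ^ 2)
      ≤ Real.sqrt (s ^ 2 * ∑ k, (x k) ^ 2) := Real.sqrt_le_sqrt (h _)
    _ = s * Real.sqrt (∑ k, (x k) ^ 2) := by
        rw [Real.sqrt_mul (sq_nonneg s), Real.sqrt_sq hs]

lemma cnorm_le_specRad {n : ℕ} (M : Matrix (Fin n) (Fin n) ℝ) (hsym : Mᵀ = M) :
    ‖M.map (algebraMap ℝ ℂ)‖ ≤ max (specRad M) 0 := by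
  set Mc := M.map (algebraMap ℝ ℂ) with hMc
  have hsa : IsSelfAdjoint Mc := by
    show Mcᴴ = Mc
    ext i j
    simp only [hMc, Matrix.conjTranspose_apply, Matrix.map_apply]
    rw [← congrFun (congrFun hsym j) i]
    simp [Matrix.transpose_apply]
  have h1 : spectralRadius ℂ Mc = ‖Mc‖₊ := hsa.spectralRadius_eq_nnnorm
  have h2 : spectralRadius ℂ Mc ≤ ENNReal.ofReal (max (specRad M) 0) := by
    rw [spectralRadius]
    refine iSup₂_le fun k hk => ?_
    have hb : ‖k‖ ≤ specRad M := by
      refine le_csSup ?_ ⟨k, hk, rfl⟩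
      exact ((spectrum.isCompact Mc).image continuous_norm).bddAbove
    rw [← enorm_eq_nnnorm, ← ofReal_norm]
    exact ENNReal.ofReal_le_ofReal (le_max_of_le_left hb)
  rw [h1, ← enorm_eq_nnnorm, ← ofReal_norm] at h2
  exact (ENNReal.ofReal_le_ofReal_iff (le_max_right _ _)).mp h2

lemma quad_le_specRad {n : ℕ} (M : Matrix (Fin n) (Fin n) ℝ) (hsym : Mᵀ = M) (x : Fin n → ℝ) :
    x ⬝ᵥ M.mulVec x ≤ max (specRad M) 0 * ∑ k, (x k)^2 := by
  set Mc := M.map (algebraMap ℝ ℂ) with hMc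
  set xc : EuclideanSpace ℂ (Fin n) := (WithLp.equiv 2 _).symm (fun i => (x i : ℂ)) with hxc
  have hcoord : ∀ k, Matrix.toEuclideanCLM (𝕜 := ℂ) Mc xc k = ((M.mulVec x k : ℝ) : ℂ) := by
    intro k
    have : Matrix.toEuclideanCLM (𝕜 := ℂ) Mc xc k = Mc.mulVec (fun i => (x i : ℂ)) k := rfl
    rw [this]
    simp [Matrix.mulVec, dotProduct, hMc, Matrix.map_apply]
  have hip : (inner ℂ xc (Matrix.toEuclideanCLM (𝕜 := ℂ) Mc xc) : ℂ) = ((x ⬝ᵥ M.mulVec x : ℝ) : ℂ) := by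
    rw [PiLp.inner_apply]
    simp only [hcoord, RCLike.inner_apply]
    have : ∀ i, xc i = ((x i : ℝ) : ℂ) := fun i => rfl
    simp only [this]
    rw [dotProduct]
    push_cast
    congr 1
    ext i
    rw [← Complex.ofReal_mul]
    simp [mul_comm]
  have hnormxc : ‖xc‖ ^ 2 = ∑ k, (x k)^2 := by
    rw [EuclideanSpace.norm_eq, Real.sq_sqrt (by positivity)]
    congr 1; ext i
    have : xc i = ((x i : ℝ) : ℂ) := rfl
    rw [this, Complex.norm_real, Real.norm_eq_abs, sq_abs]
  calc x ⬝ᵥ M.mulVec x = (((x ⬝ᵥ M.mulVec x : ℝ) : ℂ)).re := by simp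
    _ ≤ ‖((x ⬝ᵥ M.mulVec x : ℝ) : ℂ)‖ := Complex.re_le_norm _
    _ = ‖(inner ℂ xc (Matrix.toEuclideanCLM (𝕜 := ℂ) Mc xc) : ℂ)‖ := by rw [hip]
    _ ≤ ‖xc‖ * ‖Matrix.toEuclideanCLM (𝕜 := ℂ) Mc xc‖ := norm_inner_le_norm _ _
    _ ≤ ‖xc‖ * (‖Matrix.toEuclideanCLM (𝕜 := ℂ) Mc‖ * ‖xc‖) := by
        gcongr; exact ContinuousLinearMap.le_opNorm _ _
    _ = ‖Mc‖ * ‖xc‖ ^ 2 := by rw [← Matrix.cstar_norm_def]; ring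
    _ ≤ max (specRad M) 0 * ‖xc‖ ^ 2 :=
        mul_le_mul_of_nonneg_right (cnorm_le_specRad M hsym) (sq_nonneg _)
    _ = max (specRad M) 0 * ∑ k, (x k)^2 := by rw [hnormxc]

lemma sq_integral_le {Ω : Type*} [MeasurableSpace Ω] (P : Measure Ω) [IsProbabilityMeasure P]
    (g : Ω → ℝ) (hg : AEStronglyMeasurable g P) (C : ℝ) (hb : ∀ᵐ ω ∂P, ‖g ω‖ ≤ C) :
    (∫ ω, g ω ∂P)^2 ≤ ∫ ω, (g ω)^2 ∂P := by
  have hmem : MemLp g 2 P := MemLp.of_bound hg C hb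
  have h := variance_nonneg g P
  rw [variance_eq_sub hmem] at h
  have : (∫ ω, g ω ∂P)^2 ≤ ∫ ω, (g ^ 2) ω ∂P := by linarith
  simpa [Pi.pow_apply] using this

end Aux

/-! ### Jperp algebra -/

lemma Jperp_symm (hN : 0 < N) : (Jperp N)ᵀ = Jperp N := by
  ext i j
  simp [Jperp, Jmat, Matrix.transpose_apply, Matrix.one_apply, eq_comm]

lemma Jperp_idem (hN : 0 < N) : Jperp N * Jperp N = Jperp N := by
  have hNne : (N : ℝ) ≠ 0 := Nat.cast_ne_zero.mpr hN.ne'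
  have hJJ : Jmat N * Jmat N = Jmat N := by
    ext i j
    simp only [Jmat, Matrix.mul_apply, Matrix.of_apply, Finset.sum_const, Finset.card_univ,
      Fintype.card_fin, nsmul_eq_mul]
    field_simp
  simp only [Jperp, mul_sub, sub_mul, one_mul, mul_one, hJJ]
  abel

lemma proj_quad {N : ℕ} (hN : 0 < N) (w : Matrix (Fin N) (Fin N) ℝ) (x : Fin N → ℝ) :
    ∑ k, (((Jperp N * w) *ᵥ x) k)^2 = x ⬝ᵥ ((wᵀ * Jperp N * w) *ᵥ x) := by
  have hmv : (Jperp N * w) *ᵥ x = Jperp N *ᵥ (w *ᵥ x) := (Matrix.mulVec_mulVec x (Jperp N) w).symm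
  have h1 : ∑ k, (((Jperp N * w) *ᵥ x) k)^2
      = (Jperp N *ᵥ (w *ᵥ x)) ⬝ᵥ (Jperp N *ᵥ (w *ᵥ x)) := by
    rw [hmv]; simp [dotProduct, sq]
  have hv : (Jperp N *ᵥ (w *ᵥ x)) ᵥ* Jperp N = Jperp N *ᵥ (w *ᵥ x) := by
    have he : (Jperp N *ᵥ (w *ᵥ x)) ᵥ* Jperp N = (Jperp N *ᵥ (w *ᵥ x)) ᵥ* (Jperp N)ᵀ := by
      rw [Jperp_symm N hN]
    rw [he, Matrix.vecMul_transpose, Matrix.mulVec_mulVec, Jperp_idem N hN]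
  have h2 : (Jperp N *ᵥ (w *ᵥ x)) ⬝ᵥ (Jperp N *ᵥ (w *ᵥ x))
      = (w *ᵥ x) ⬝ᵥ (Jperp N *ᵥ (w *ᵥ x)) := by
    rw [Matrix.dotProduct_mulVec, hv, dotProduct_comm]
  have h3 : x ⬝ᵥ ((wᵀ * Jperp N * w) *ᵥ x) = (w *ᵥ x) ⬝ᵥ (Jperp N *ᵥ (w *ᵥ x)) := by
    rw [mul_assoc, ← Matrix.mulVec_mulVec, Matrix.dotProduct_mulVec, Matrix.vecMul_transpose,
      ← Matrix.mulVec_mulVec]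
  rw [h1, h2, h3]

section Main

open scoped Matrix.Norms.L2Operator

/-- If `W` is a random row-stochastic matrix (nonnegative entries, `W𝟏 = 𝟏` a.s.)
whose mean is `W̄ = E[W]`, and the spectral radius of `E[Wᵀ J⊥ W]` is `< 1`, then
`vᵀ := (1/N) 𝟏ᵀ W̄ (I - J⊥ W̄)⁻¹` is the unique nonnegative vector with `vᵀ = vᵀ W̄`, `vᵀ𝟏 = 1`. -/
theorem perron_vector_unique
    (hN : 0 < N)
    {Ω : Type*} [MeasurableSpace Ω] (P : Measure Ω) [IsProbabilityMeasure P]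
    (W : Ω → Matrix (Fin N) (Fin N) ℝ) (hWmeas : Measurable W)
    (hWrs : ∀ᵐ ω ∂P, RowStochastic N (W ω))
    (hsr : specRad (Matrix.of fun i j => ∫ ω, ((W ω)ᵀ * Jperp N * W ω) i j ∂P) < 1)
    (Wbar : Matrix (Fin N) (Fin N) ℝ)
    (hWbar : Wbar = Matrix.of fun i j => ∫ ω, W ω i j ∂P)
    (v : Fin N → ℝ)
    (hv : v = Matrix.vecMul (fun _ => (N : ℝ)⁻¹) (Wbar * (1 - Jperp N * Wbar)⁻¹)) :
    ((∀ i, 0 ≤ v i) ∧ Matrix.vecMul v Wbar = v ∧ v ⬝ᵥ (fun _ => (1 : ℝ)) = 1) ∧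
      ∀ u : Fin N → ℝ, (∀ i, 0 ≤ u i) → Matrix.vecMul u Wbar = u →
        u ⬝ᵥ (fun _ => (1 : ℝ)) = 1 → u = v := by
  classical
  have hNne : (N : ℝ) ≠ 0 := Nat.cast_ne_zero.mpr hN.ne'
  -- measurability and boundedness of entries
  have hmeas : ∀ i j, Measurable fun ω => W ω i j := fun i j =>
    (measurable_pi_apply j).comp ((measurable_pi_apply i).comp hWmeas)
  have hbdd : ∀ᵐ ω ∂P, ∀ i j, 0 ≤ W ω i j ∧ W ω i j ≤ 1 := by
    filter_upwards [hWrs] with ω hω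
    intro i j
    refine ⟨hω.1 i j, ?_⟩
    calc W ω i j ≤ ∑ k, W ω i k :=
          Finset.single_le_sum (f := fun k => W ω i k) (fun k _ => hω.1 i k) (Finset.mem_univ j)
      _ = 1 := hω.2 i
  have hInt : ∀ i j, Integrable (fun ω => W ω i j) P := by
    intro i j
    refine (integrable_const (1:ℝ)).mono' ((hmeas i j).aestronglyMeasurable) ?_
    filter_upwards [hbdd] with ω hω
    rw [Real.norm_eq_abs, abs_le]
    exact ⟨le_trans (by norm_num) (hω i j).1, (hω i j).2⟩
  -- Wbar is row-stochastic
  have hWbar_nonneg : ∀ i j, 0 ≤ Wbar i j := by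
    intro i j; rw [hWbar]
    exact integral_nonneg_of_ae (by filter_upwards [hbdd] with ω hω; exact (hω i j).1)
  have hWbar_rows : ∀ i, ∑ j, Wbar i j = 1 := by
    intro i
    simp only [hWbar, Matrix.of_apply]
    rw [← integral_finset_sum _ (fun j _ => hInt i j)]
    have : ∫ ω, ∑ j, W ω i j ∂P = ∫ _ω, (1:ℝ) ∂P := by
      refine integral_congr_ae ?_
      filter_upwards [hWrs] with ω hω
      exact hω.2 i
    rw [this]
    simp
  have hWbar1 : Wbar *ᵥ (fun _ => (1:ℝ)) = fun _ => (1:ℝ) := by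
    funext i
    simp only [Matrix.mulVec, dotProduct, mul_one]
    exact hWbar_rows i
  -- the matrix M = E[Wᵀ J⊥ W]
  set M : Matrix (Fin N) (Fin N) ℝ :=
    Matrix.of fun i j => ∫ ω, ((W ω)ᵀ * Jperp N * W ω) i j ∂P with hM
  -- entries of Wᵀ J⊥ W, measurability and bounds
  have hEexp : ∀ (w : Matrix (Fin N) (Fin N) ℝ) i j,
      (wᵀ * Jperp N * w) i j = ∑ m, (∑ k, w k i * Jperp N k m) * w m j := by
    intro w i j
    simp [Matrix.mul_apply, Matrix.transpose_apply]
  have hJb : ∀ k m, |Jperp N k m| ≤ 2 := by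
    intro k m
    have h1 : (N:ℝ)⁻¹ ≤ 1 := by
      rw [inv_le_one_iff₀]
      right
      exact_mod_cast hN
    have h0 : (0:ℝ) ≤ (N:ℝ)⁻¹ := by positivity
    simp only [Jperp, Jmat, Matrix.sub_apply, Matrix.one_apply, Matrix.of_apply]
    by_cases h : k = m
    · simp [h, abs_le]; constructor <;> linarith
    · simp [h, abs_le]; linarith
  have hEmeas : ∀ i j, Measurable fun ω => ((W ω)ᵀ * Jperp N * W ω) i j := by
    intro i j
    simp only [hEexp]
    refine Finset.measurable_sum _ fun m _ => Measurable.mul ?_ (hmeas m j)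
    exact Finset.measurable_sum _ fun k _ => (hmeas k i).mul measurable_const
  have hEbdd : ∀ᵐ ω ∂P, ∀ i j, |((W ω)ᵀ * Jperp N * W ω) i j| ≤ 2 * N^2 := by
    filter_upwards [hbdd] with ω hω
    intro i j
    rw [hEexp]
    calc |∑ m, (∑ k, W ω k i * Jperp N k m) * W ω m j|
        ≤ ∑ m, |(∑ k, W ω k i * Jperp N k m) * W ω m j| := Finset.abs_sum_le_sum_abs _ _
      _ ≤ ∑ _m : Fin N, (2 * N : ℝ) := by
          refine Finset.sum_le_sum fun m _ => ?_
          rw [abs_mul]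
          have h2 : |∑ k, W ω k i * Jperp N k m| ≤ (2 * N : ℝ) := by
            calc |∑ k, W ω k i * Jperp N k m| ≤ ∑ k, |W ω k i * Jperp N k m| :=
                  Finset.abs_sum_le_sum_abs _ _
              _ ≤ ∑ _k : Fin N, (2:ℝ) := by
                  refine Finset.sum_le_sum fun k _ => ?_
                  rw [abs_mul]
                  have := hJb k m
                  have h3 : |W ω k i| ≤ 1 := abs_le.mpr ⟨by linarith [(hω k i).1], (hω k i).2⟩
                  nlinarith [abs_nonneg (W ω k i), abs_nonneg (Jperp N k m)]
              _ = (2 * N : ℝ) := by simp [Finset.sum_const, mul_comm]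
          have h3 : |W ω m j| ≤ 1 := abs_le.mpr ⟨by linarith [(hω m j).1], (hω m j).2⟩
          nlinarith [abs_nonneg (∑ k, W ω k i * Jperp N k m), abs_nonneg (W ω m j)]
      _ = 2 * N^2 := by simp [Finset.sum_const]; ring
  have hEInt : ∀ i j, Integrable (fun ω => ((W ω)ᵀ * Jperp N * W ω) i j) P := by
    intro i j
    refine (integrable_const ((2:ℝ) * N^2)).mono' ((hEmeas i j).aestronglyMeasurable) ?_
    filter_upwards [hEbdd] with ω hω
    exact hω i j
  -- M is symmetric
  have hMsymm : Mᵀ = M := by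
    have hw : ∀ w : Matrix (Fin N) (Fin N) ℝ, (wᵀ * Jperp N * w)ᵀ = wᵀ * Jperp N * w := by
      intro w
      rw [Matrix.transpose_mul, Matrix.transpose_mul, Matrix.transpose_transpose,
        Jperp_symm N hN, mul_assoc]
    ext i j
    simp only [Matrix.transpose_apply, hM, Matrix.of_apply]
    congr 1
    funext ω
    conv_lhs => rw [← hw (W ω)]
    simp [Matrix.transpose_apply]
  -- coordinates of (J⊥ W) x
  have hmvW : ∀ (w : Matrix (Fin N) (Fin N) ℝ) (x : Fin N → ℝ) (k : Fin N),
      ((Jperp N * w) *ᵥ x) k = ∑ m, Jperp N k m * ∑ l, w m l * x l := by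
    intro w x k
    rw [← Matrix.mulVec_mulVec]
    simp [Matrix.mulVec, dotProduct]
  have hgmeas : ∀ (x : Fin N → ℝ) (k : Fin N),
      Measurable fun ω => ((Jperp N * W ω) *ᵥ x) k := by
    intro x k
    simp only [hmvW]
    refine Finset.measurable_sum _ fun m _ => Measurable.const_mul ?_ _
    exact Finset.measurable_sum _ fun l _ => (hmeas m l).mul measurable_const
  have hgbdd : ∀ (x : Fin N → ℝ), ∃ C, ∀ᵐ ω ∂P, ∀ k, |((Jperp N * W ω) *ᵥ x) k| ≤ C := by
    intro x
    refine ⟨2 * N * ∑ l, |x l|, ?_⟩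
    filter_upwards [hbdd] with ω hω
    intro k
    rw [hmvW]
    calc |∑ m, Jperp N k m * ∑ l, W ω m l * x l|
        ≤ ∑ m, |Jperp N k m * ∑ l, W ω m l * x l| := Finset.abs_sum_le_sum_abs _ _
      _ ≤ ∑ _m : Fin N, (2 * ∑ l, |x l| : ℝ) := by
          refine Finset.sum_le_sum fun m _ => ?_
          rw [abs_mul]
          have h1 : |∑ l, W ω m l * x l| ≤ ∑ l, |x l| := by
            calc |∑ l, W ω m l * x l| ≤ ∑ l, |W ω m l * x l| := Finset.abs_sum_le_sum_abs _ _
              _ ≤ ∑ l, |x l| := by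
                  refine Finset.sum_le_sum fun l _ => ?_
                  rw [abs_mul]
                  have h3 : |W ω m l| ≤ 1 := abs_le.mpr ⟨by linarith [(hω m l).1], (hω m l).2⟩
                  nlinarith [abs_nonneg (W ω m l), abs_nonneg (x l)]
          have h4 : (0:ℝ) ≤ ∑ l, |x l| :=
            Finset.sum_nonneg fun l _ => abs_nonneg (x l)
          nlinarith [hJb k m, abs_nonneg (Jperp N k m), abs_nonneg (∑ l, W ω m l * x l)]
      _ = 2 * N * ∑ l, |x l| := by
          rw [Finset.sum_const, Finset.card_univ, Fintype.card_fin, nsmul_eq_mul]; ring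
  -- expectation commutes with the linear map
  have hcoordInt : ∀ (x : Fin N → ℝ) (k : Fin N),
      ((Jperp N * Wbar) *ᵥ x) k = ∫ ω, ((Jperp N * W ω) *ᵥ x) k ∂P := by
    intro x k
    simp only [hmvW]
    rw [integral_finset_sum _ (fun m _ =>
      ((integrable_finset_sum _ (fun l _ => (hInt m l).mul_const (x l))).const_mul _))]
    congr 1
    funext m
    rw [integral_const_mul]
    congr 1
    rw [integral_finset_sum _ (fun l _ => (hInt m l).mul_const (x l))]
    congr 1
    funext l
    rw [integral_mul_const, hWbar]
    simp
  -- the quadratic-form (Jensen) inequality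
  have hBquad : ∀ x : Fin N → ℝ,
      ∑ k, (((Jperp N * Wbar) *ᵥ x) k)^2 ≤ x ⬝ᵥ (M *ᵥ x) := by
    intro x
    obtain ⟨C, hC⟩ := hgbdd x
    have hsq_int : ∀ k : Fin N, Integrable (fun ω => (((Jperp N * W ω) *ᵥ x) k)^2) P := by
      intro k
      refine (integrable_const (C^2)).mono'
        (((hgmeas x k).pow_const 2).aestronglyMeasurable) ?_
      filter_upwards [hC] with ω hω
      rw [Real.norm_eq_abs, abs_pow]
      exact pow_le_pow_left₀ (abs_nonneg _) (hω k) 2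
    have hstep1 : ∀ k : Fin N, (((Jperp N * Wbar) *ᵥ x) k)^2
        ≤ ∫ ω, (((Jperp N * W ω) *ᵥ x) k)^2 ∂P := by
      intro k
      rw [hcoordInt x k]
      exact sq_integral_le P _ ((hgmeas x k).aestronglyMeasurable) C
        (by filter_upwards [hC] with ω hω; rw [Real.norm_eq_abs]; exact hω k)
    have hexp : ∀ (A : Matrix (Fin N) (Fin N) ℝ) (y : Fin N → ℝ),
        y ⬝ᵥ (A *ᵥ y) = ∑ i, ∑ j, y i * (A i j * y j) := by
      intro A y; simp [dotProduct, Matrix.mulVec, Finset.mul_sum]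
    calc ∑ k, (((Jperp N * Wbar) *ᵥ x) k)^2
        ≤ ∑ k, ∫ ω, (((Jperp N * W ω) *ᵥ x) k)^2 ∂P := Finset.sum_le_sum fun k _ => hstep1 k
      _ = ∫ ω, ∑ k, (((Jperp N * W ω) *ᵥ x) k)^2 ∂P :=
          (integral_finset_sum _ (fun k _ => hsq_int k)).symm
      _ = ∫ ω, x ⬝ᵥ (((W ω)ᵀ * Jperp N * W ω) *ᵥ x) ∂P :=
          integral_congr_ae (Eventually.of_forall fun ω => proj_quad hN (W ω) x)
      _ = x ⬝ᵥ (M *ᵥ x) := by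
          simp only [hexp]
          rw [integral_finset_sum _ (fun i _ => integrable_finset_sum _
            (fun j _ => ((hEInt i j).mul_const (x j)).const_mul (x i)))]
          congr 1
          funext i
          rw [integral_finset_sum _ (fun j _ => ((hEInt i j).mul_const (x j)).const_mul (x i))]
          congr 1
          funext j
          rw [integral_const_mul, integral_mul_const, hM]
          simp
  -- operator norm bound
  have hr0 : (0:ℝ) ≤ max (specRad M) 0 := le_max_right _ _
  have hr1 : max (specRad M) 0 < 1 := max_lt hsr one_pos
  have hs0 : (0:ℝ) ≤ Real.sqrt (max (specRad M) 0) := Real.sqrt_nonneg _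
  have hs1 : Real.sqrt (max (specRad M) 0) < 1 := by
    rw [show (1:ℝ) = Real.sqrt 1 by simp]
    exact Real.sqrt_lt_sqrt hr0 hr1
  have hBnorm : ‖Jperp N * Wbar‖ ≤ Real.sqrt (max (specRad M) 0) := by
    refine opNorm_le_of_sq _ hs0 fun x => ?_
    calc ∑ k, (((Jperp N * Wbar) *ᵥ x) k)^2 ≤ x ⬝ᵥ (M *ᵥ x) := hBquad x
      _ ≤ max (specRad M) 0 * ∑ k, (x k)^2 := quad_le_specRad M hMsymm x
      _ = (Real.sqrt (max (specRad M) 0))^2 * ∑ k, (x k)^2 := by rw [Real.sq_sqrt hr0]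
  have hBlt : ‖Jperp N * Wbar‖ < 1 := lt_of_le_of_lt hBnorm hs1
  -- Neumann series setup
  set B : Matrix (Fin N) (Fin N) ℝ := Jperp N * Wbar with hB
  have hUnit : IsUnit (1 - B) := isUnit_one_sub_of_norm_lt_one hBlt
  have hdet : IsUnit (1 - B).det := (Matrix.isUnit_iff_isUnit_det _).mp hUnit
  have hSum : HasSum (fun n : ℕ => B ^ n) (Ring.inverse (1 - B)) :=
    hasSum_geom_series_inverse B hBlt
  have hinv_eq : (1 - B)⁻¹ = Ring.inverse (1 - B) := Matrix.nonsing_inv_eq_ringInverse _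
  -- the vector c
  set e : Fin N → ℝ := fun _ => (N : ℝ)⁻¹ with he
  set c : Fin N → ℝ := e ᵥ* Wbar with hc
  have hvc : v = c ᵥ* (1 - B)⁻¹ := by
    rw [hv, ← Matrix.vecMul_vecMul]
  have hveq : v ᵥ* (1 - B) = c := by
    rw [hvc, Matrix.vecMul_vecMul, Matrix.nonsing_inv_mul _ hdet, Matrix.vecMul_one]
  have hc1 : c ⬝ᵥ (fun _ => (1:ℝ)) = 1 := by
    have h1 : c ⬝ᵥ (fun _ => (1:ℝ)) = e ⬝ᵥ (Wbar *ᵥ fun _ => (1:ℝ)) := by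
      rw [hc, ← Matrix.dotProduct_mulVec]
    rw [h1, hWbar1]
    simp only [he, dotProduct, mul_one, Finset.sum_const, Finset.card_univ,
      Fintype.card_fin, nsmul_eq_mul]
    field_simp
  -- key algebraic identity
  have halg : ∀ u : Fin N → ℝ, u ⬝ᵥ (fun _ => (1:ℝ)) = 1 → u ᵥ* B = u ᵥ* Wbar - c := by
    intro u hu
    have hsum_u : ∑ i, u i = 1 := by simpa [dotProduct] using hu
    have h1 : u ᵥ* Jmat N = e := by
      funext j
      simp only [Matrix.vecMul, dotProduct, Jmat, Matrix.of_apply, he]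
      rw [← Finset.sum_mul, hsum_u, one_mul]
    have h2 : u ᵥ* Jperp N = u - e := by
      rw [Jperp, Matrix.vecMul_sub, Matrix.vecMul_one, h1]
    rw [hB, ← Matrix.vecMul_vecMul, h2, Matrix.sub_vecMul, hc]
  -- v sums to one
  have hB1 : B *ᵥ (fun _ => (1:ℝ)) = 0 := by
    have hJ1 : Jmat N *ᵥ (fun _ => (1:ℝ)) = fun _ => (1:ℝ) := by
      funext i
      simp only [Matrix.mulVec, dotProduct, Jmat, Matrix.of_apply, mul_one,
        Finset.sum_const, Finset.card_univ, Fintype.card_fin, nsmul_eq_mul]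
      field_simp
    rw [hB, ← Matrix.mulVec_mulVec, hWbar1, Jperp, Matrix.sub_mulVec, Matrix.one_mulVec, hJ1]
    simp
  have h1v : v ⬝ᵥ (fun _ => (1:ℝ)) = 1 := by
    have h0 : (v ᵥ* (1 - B)) ⬝ᵥ (fun _ => (1:ℝ)) = 1 := by rw [hveq]; exact hc1
    rw [← Matrix.dotProduct_mulVec, Matrix.sub_mulVec, Matrix.one_mulVec, hB1, sub_zero] at h0
    exact h0
  -- v is stationary
  have hstat : v ᵥ* Wbar = v := by
    have h0 := hveq
    rw [Matrix.vecMul_sub, Matrix.vecMul_one, halg v h1v] at h0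
    funext i
    have := congrFun h0 i
    simp only [Pi.sub_apply] at this ⊢
    linarith
  -- nonnegativity
  have hpow_nonneg : ∀ n : ℕ, ∀ i j, 0 ≤ (Wbar ^ n) i j := by
    intro n
    induction n with
    | zero =>
        intro i j
        rw [pow_zero]
        by_cases h : i = j <;> simp [Matrix.one_apply, h]
    | succ n ih =>
        intro i j
        rw [pow_succ, Matrix.mul_apply]
        exact Finset.sum_nonneg fun m _ => mul_nonneg (ih i m) (hWbar_nonneg m j)
  have he_nonneg : ∀ j, (0:ℝ) ≤ e j := by intro j; rw [he]; positivity
  have hu_nonneg : ∀ n : ℕ, ∀ j, 0 ≤ (e ᵥ* Wbar ^ (n+1)) j := by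
    intro n j
    simp only [Matrix.vecMul, dotProduct]
    exact Finset.sum_nonneg fun i _ => mul_nonneg (he_nonneg i) (hpow_nonneg (n+1) i j)
  have hones : ∀ n : ℕ, (Wbar ^ n) *ᵥ (fun _ => (1:ℝ)) = fun _ => (1:ℝ) := by
    intro n
    induction n with
    | zero => simp [Matrix.one_mulVec]
    | succ n ih => rw [pow_succ, ← Matrix.mulVec_mulVec, hWbar1, ih]
  have hdot1 : ∀ n : ℕ, (e ᵥ* Wbar ^ (n+1)) ⬝ᵥ (fun _ => (1:ℝ)) = 1 := by
    intro n
    rw [← Matrix.dotProduct_mulVec, hones (n+1)]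
    simp only [he, dotProduct, mul_one, Finset.sum_const, Finset.card_univ,
      Fintype.card_fin, nsmul_eq_mul]
    field_simp
  have hpow_id : ∀ n : ℕ,
      e ᵥ* Wbar ^ (n+1) = c ᵥ* (∑ i ∈ Finset.range (n+1), B ^ i) := by
    intro n
    induction n with
    | zero => rw [pow_one, Finset.sum_range_one, pow_zero, Matrix.vecMul_one, hc]
    | succ n ih =>
        have hsplit : ∑ i ∈ Finset.range (n+2), B ^ i
            = (∑ i ∈ Finset.range (n+1), B ^ i) * B + 1 := by
          rw [Finset.sum_range_succ']
          simp [pow_succ, Finset.sum_mul]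
        have halg' := halg (e ᵥ* Wbar ^ (n+1)) (hdot1 n)
        calc e ᵥ* Wbar ^ (n+2) = (e ᵥ* Wbar ^ (n+1)) ᵥ* Wbar := by
              rw [pow_succ, ← Matrix.vecMul_vecMul]
          _ = (e ᵥ* Wbar ^ (n+1)) ᵥ* B + c := by rw [halg', sub_add_cancel]
          _ = (c ᵥ* (∑ i ∈ Finset.range (n+1), B ^ i)) ᵥ* B + c := by rw [ih]
          _ = c ᵥ* (∑ i ∈ Finset.range (n+2), B ^ i) := by
              rw [hsplit, Matrix.vecMul_add, Matrix.vecMul_one, Matrix.vecMul_vecMul]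
  have hpartial_nonneg : ∀ n : ℕ, ∀ j, 0 ≤ (c ᵥ* ∑ i ∈ Finset.range n, B ^ i) j := by
    intro n j
    cases n with
    | zero => simp
    | succ n => rw [← hpow_id n]; exact hu_nonneg n j
  have hv_nonneg : ∀ j, 0 ≤ v j := by
    intro j
    have hcont : Continuous fun A : Matrix (Fin N) (Fin N) ℝ => (c ᵥ* A) j := by
      let L : Matrix (Fin N) (Fin N) ℝ →ₗ[ℝ] ℝ :=
        { toFun := fun A => (c ᵥ* A) j
          map_add' := by
            intro A A'
            show (c ᵥ* (A + A')) j = (c ᵥ* A) j + (c ᵥ* A') j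
            rw [Matrix.vecMul_add]; rfl
          map_smul' := by
            intro r A
            show (c ᵥ* (r • A)) j = r • (c ᵥ* A) j
            simp only [Matrix.vecMul, dotProduct, Matrix.smul_apply, smul_eq_mul,
              Finset.mul_sum]
            congr 1; funext i; ring }
      exact L.continuous_of_finiteDimensional
    have hlim : Tendsto (fun n => (c ᵥ* ∑ i ∈ Finset.range n, B ^ i) j) atTop
        (𝓝 ((c ᵥ* Ring.inverse (1 - B)) j)) :=
      (hcont.tendsto (Ring.inverse (1 - B))).comp hSum.tendsto_sum_nat
    have h0 : 0 ≤ (c ᵥ* Ring.inverse (1 - B)) j :=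
      ge_of_tendsto' hlim fun n => hpartial_nonneg n j
    rwa [← hinv_eq, ← hvc] at h0
  refine ⟨⟨hv_nonneg, hstat, h1v⟩, ?_⟩
  intro u _ hu1 hu2
  have h : u ᵥ* (1 - B) = c := by
    rw [Matrix.vecMul_sub, Matrix.vecMul_one, halg u hu2, hu1, sub_sub_cancel]
  calc u = (u ᵥ* (1 - B)) ᵥ* (1 - B)⁻¹ := by
        rw [Matrix.vecMul_vecMul, Matrix.mul_nonsing_inv _ hdet, Matrix.vecMul_one]
    _ = c ᵥ* (1 - B)⁻¹ := by rw [h]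
    _ = v := hvc.symm


end Main


end DistSA
end
end

section
/- Suppose every W_n is row-stochastic, θ_n = 𝒲_n(θ_{n−1} + γ_n Y_n) with 𝒲_n = W_n ⊗ I_d, and lim_{n→∞} γ_{n+1}/γ_n = 1 with γ_n > 0. Then there exists a constant C > 0 such that, almost surely, for all n ≥ 0: |θ_{n+1} − θ_n| ≤ C γ_n (|Y_{n+1}| + |φ_n|), where φ_n := γ_{n+1}^{−1} 𝒥⊥ θ_n. -/
open MeasureTheory ProbabilityTheory Filter Matrix Set
open scoped Kronecker Topology ENNReal NNReal

noncomputable section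

namespace DistSA

variable (N d : ℕ)

lemma enorm_eq_norm {ι : Type*} [Fintype ι] (x : ι → ℝ) :
    enorm x = ‖(WithLp.equiv 2 (ι → ℝ)).symm x‖ := by
  rw [EuclideanSpace.norm_eq]
  simp [enorm, sq_abs]

lemma enorm_nonneg' {ι : Type*} [Fintype ι] (x : ι → ℝ) : 0 ≤ enorm x := Real.sqrt_nonneg _

lemma enorm_add_le {ι : Type*} [Fintype ι] (x y : ι → ℝ) :
    enorm (x + y) ≤ enorm x + enorm y := by
  simp only [enorm_eq_norm]
  exact norm_add_le ((WithLp.equiv 2 (ι → ℝ)).symm x) ((WithLp.equiv 2 (ι → ℝ)).symm y)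

lemma enorm_smul {ι : Type*} [Fintype ι] (c : ℝ) (x : ι → ℝ) :
    enorm (c • x) = |c| * enorm x := by
  simp only [enorm_eq_norm]
  rw [show (WithLp.equiv 2 (ι → ℝ)).symm (c • x)
      = c • (WithLp.equiv 2 (ι → ℝ)).symm x from rfl, norm_smul, Real.norm_eq_abs]

lemma Kro_mulVec_apply {N d : ℕ} (w : Matrix (Fin N) (Fin N) ℝ) (x : EVec N d) (i : Fin N)
    (k : Fin d) : (Kro N d w).mulVec x (i, k) = ∑ j, w i j * x (j, k) := by
  simp [Kro, Matrix.mulVec, dotProduct, Fintype.sum_prod_type, Matrix.one_apply,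
    mul_ite, ite_mul, mul_assoc]

lemma Kro_enorm_le {N d : ℕ} {w : Matrix (Fin N) (Fin N) ℝ} (hw : RowStochastic N w)
    (x : EVec N d) : enorm ((Kro N d w).mulVec x) ≤ Real.sqrt N * enorm x := by
  have hw1 : ∀ i j, w i j ≤ 1 := by
    intro i j
    calc w i j ≤ ∑ j', w i j' :=
          Finset.single_le_sum (fun j' _ => hw.1 i j') (Finset.mem_univ j)
      _ = 1 := hw.2 i
  have key : ∀ (i : Fin N) (k : Fin d),
      ((Kro N d w).mulVec x (i, k)) ^ 2 ≤ ∑ j, (x (j, k)) ^ 2 := by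
    intro i k
    rw [Kro_mulVec_apply]
    have cs : (∑ j, w i j * x (j, k)) ^ 2
        ≤ (∑ j, (Real.sqrt (w i j)) ^ 2) * ∑ j, (Real.sqrt (w i j) * x (j, k)) ^ 2 := by
      have := Finset.sum_mul_sq_le_sq_mul_sq Finset.univ
        (fun j => Real.sqrt (w i j)) (fun j => Real.sqrt (w i j) * x (j, k))
      calc (∑ j, w i j * x (j, k)) ^ 2
          = (∑ j, Real.sqrt (w i j) * (Real.sqrt (w i j) * x (j, k))) ^ 2 := by
            congr 1; apply Finset.sum_congr rfl; intro j _
            rw [← mul_assoc, Real.mul_self_sqrt (hw.1 i j)]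
        _ ≤ _ := this
    have h1 : (∑ j, (Real.sqrt (w i j)) ^ 2) = 1 := by
      rw [← hw.2 i]; apply Finset.sum_congr rfl; intro j _; exact Real.sq_sqrt (hw.1 i j)
    calc (∑ j, w i j * x (j, k)) ^ 2
        ≤ ∑ j, (Real.sqrt (w i j) * x (j, k)) ^ 2 := by rw [h1, one_mul] at cs; exact cs
      _ = ∑ j, w i j * (x (j, k)) ^ 2 := by
          apply Finset.sum_congr rfl; intro j _
          rw [mul_pow, Real.sq_sqrt (hw.1 i j)]
      _ ≤ ∑ j, (x (j, k)) ^ 2 := by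
          apply Finset.sum_le_sum; intro j _
          exact mul_le_of_le_one_left (sq_nonneg _) (hw1 i j)
  unfold enorm
  rw [← Real.sqrt_mul (by positivity)]
  apply Real.sqrt_le_sqrt
  calc ∑ p : Fin N × Fin d, ((Kro N d w).mulVec x p) ^ 2
      = ∑ i : Fin N, ∑ k : Fin d, ((Kro N d w).mulVec x (i, k)) ^ 2 := by
        rw [Fintype.sum_prod_type]
    _ ≤ ∑ _i : Fin N, ∑ k : Fin d, ∑ j : Fin N, (x (j, k)) ^ 2 := by
        apply Finset.sum_le_sum; intro i _; apply Finset.sum_le_sum; intro k _; exact key i k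
    _ = (N : ℝ) * ∑ p : Fin N × Fin d, (x p) ^ 2 := by
        rw [Finset.sum_const, Finset.card_univ, Fintype.card_fin, Fintype.sum_prod_type,
          Finset.sum_comm, nsmul_eq_mul]

lemma Jb_mulVec_apply {N d : ℕ} (x : EVec N d) (i : Fin N) (k : Fin d) :
    (Jb N d).mulVec x (i, k) = (N : ℝ)⁻¹ * ∑ m, x (m, k) := by
  rw [Jb, Kro_mulVec_apply, Finset.mul_sum]
  rfl

lemma Kro_mulVec_Jb {N d : ℕ} {w : Matrix (Fin N) (Fin N) ℝ} (hw : RowStochastic N w)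
    (x : EVec N d) : (Kro N d w).mulVec ((Jb N d).mulVec x) = (Jb N d).mulVec x := by
  funext p
  obtain ⟨i, k⟩ := p
  rw [Kro_mulVec_apply, Jb_mulVec_apply]
  calc ∑ j, w i j * (Jb N d).mulVec x (j, k)
      = ∑ j, w i j * ((N : ℝ)⁻¹ * ∑ m, x (m, k)) := by
        apply Finset.sum_congr rfl; intro j _; rw [Jb_mulVec_apply]
    _ = (∑ j, w i j) * ((N : ℝ)⁻¹ * ∑ m, x (m, k)) := by rw [Finset.sum_mul]
    _ = (N : ℝ)⁻¹ * ∑ m, x (m, k) := by rw [hw.2 i, one_mul]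

lemma Jb_add_Jperpb (N d : ℕ) : Jb N d + Jperpb N d = 1 := by
  have : Jmat N + Jperp N = 1 := by rw [Jperp]; abel
  rw [Jb, Jperpb, Kro, Kro, ← Matrix.add_kronecker, this, Matrix.one_kronecker_one]

lemma enorm_sub_le {ι : Type*} [Fintype ι] (x y : ι → ℝ) :
    enorm (x - y) ≤ enorm x + enorm y := by
  simp only [enorm_eq_norm]
  exact norm_sub_le ((WithLp.equiv 2 (ι → ℝ)).symm x) ((WithLp.equiv 2 (ι → ℝ)).symm y)

/-- If every `W_n` is row stochastic, `θ_n = (W_n ⊗ I_d)(θ_{n-1} + γ_n Y_n)` and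
`γ_{n+1}/γ_n → 1`, then there is `C > 0` with, almost surely, for all `n`,
`|θ_{n+1} - θ_n| ≤ C γ_n (|Y_{n+1}| + |φ_n|)` where `φ_n = γ_{n+1}⁻¹ 𝒥⊥ θ_n`. -/
theorem increment_bound
    (hN : 0 < N) (hd : 0 < d)
    {Ω : Type*} [MeasurableSpace Ω] (P : Measure Ω) [IsProbabilityMeasure P]
    (γ : ℕ → ℝ) (hγpos : ∀ n, 0 < γ n)
    (hγratio : Tendsto (fun n => γ (n + 1) / γ n) atTop (𝓝 1))
    (θ0 : Ω → EVec N d)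
    (W : ℕ → Ω → Matrix (Fin N) (Fin N) ℝ)
    (Y : ℕ → Ω → EVec N d)
    (θ : ℕ → Ω → EVec N d)
    (hθ0 : θ 0 = θ0)
    (hrs : ∀ n ω, RowStochastic N (W n ω))
    (hrec : ∀ n ω, θ (n + 1) ω = (Kro N d (W (n + 1) ω)).mulVec (θ n ω + γ (n + 1) • Y (n + 1) ω))
    (φ : ℕ → Ω → EVec N d)
    (hφ : ∀ n ω, φ n ω = (γ (n + 1))⁻¹ • (Jperpb N d).mulVec (θ n ω)) :
    ∃ C > 0, ∀ᵐ ω ∂P, ∀ n : ℕ,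
      enorm (θ (n + 1) ω - θ n ω) ≤ C * γ n * (enorm (Y (n + 1) ω) + enorm (φ n ω)) := by
  -- step-size ratio bound
  have h2 : ∀ᶠ n in atTop, γ (n + 1) / γ n ≤ 2 := by
    have := hγratio.eventually (eventually_le_nhds (by norm_num : (1 : ℝ) < 2))
    exact this
  obtain ⟨n0, hn0⟩ := eventually_atTop.mp h2
  set M : ℝ := 2 + ∑ n ∈ Finset.range n0, γ (n + 1) / γ n with hMdef
  have hsumnn : 0 ≤ ∑ n ∈ Finset.range n0, γ (n + 1) / γ n :=
    Finset.sum_nonneg fun n _ => le_of_lt (div_pos (hγpos _) (hγpos _))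
  have hM1 : 1 ≤ M := by simp only [hMdef]; linarith
  have hMγ : ∀ n, γ (n + 1) ≤ M * γ n := by
    intro n
    rw [← div_le_iff₀ (hγpos n)] at *
    rcases le_or_gt n0 n with h | h
    · have := hn0 n h; simp only [hMdef]; linarith
    · have : γ (n + 1) / γ n ≤ ∑ m ∈ Finset.range n0, γ (m + 1) / γ m :=
        Finset.single_le_sum (f := fun m => γ (m + 1) / γ m)
          (fun m _ => le_of_lt (div_pos (hγpos _) (hγpos _))) (Finset.mem_range.mpr h)
      simp only [hMdef]; linarith
  set s : ℝ := Real.sqrt N with hsdef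
  have hs : 0 ≤ s := Real.sqrt_nonneg _
  refine ⟨M * (s + 1), by positivity, ae_of_all P fun ω n => ?_⟩
  set w := W (n + 1) ω with hwdef
  have hw : RowStochastic N w := hrs (n + 1) ω
  set p : EVec N d := (Jperpb N d).mulVec (θ n ω) with hpdef
  have hp : p = γ (n + 1) • φ n ω := by
    rw [hφ, smul_smul, mul_inv_cancel₀ (ne_of_gt (hγpos (n + 1))), one_smul]
  have hsplit : θ n ω = (Jb N d).mulVec (θ n ω) + p := by
    have := congrArg (fun A => Matrix.mulVec A (θ n ω)) (Jb_add_Jperpb N d)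
    simpa [Matrix.add_mulVec, Matrix.one_mulVec] using this.symm
  have hWθ : (Kro N d w).mulVec (θ n ω)
      = (Jb N d).mulVec (θ n ω) + (Kro N d w).mulVec p := by
    conv_lhs => rw [hsplit]
    rw [Matrix.mulVec_add, Kro_mulVec_Jb hw]
  have hid : θ (n + 1) ω - θ n ω
      = γ (n + 1) • ((Kro N d w).mulVec (Y (n + 1) ω)
          + ((Kro N d w).mulVec (φ n ω) - φ n ω)) := by
    rw [hrec n ω, Matrix.mulVec_add, Matrix.mulVec_smul, hWθ]
    nth_rewrite 2 [hsplit]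
    rw [hp, Matrix.mulVec_smul]
    module
  rw [hid, enorm_smul, abs_of_pos (hγpos (n + 1))]
  have hb1 : enorm ((Kro N d w).mulVec (Y (n + 1) ω)
        + ((Kro N d w).mulVec (φ n ω) - φ n ω))
      ≤ s * enorm (Y (n + 1) ω) + (s * enorm (φ n ω) + enorm (φ n ω)) :=
    le_trans (enorm_add_le _ _) (add_le_add (Kro_enorm_le hw _)
      (le_trans (enorm_sub_le _ _) (add_le_add_left (Kro_enorm_le hw _) _)))
  have ha : 0 ≤ enorm (Y (n + 1) ω) := enorm_nonneg' _
  have hb : 0 ≤ enorm (φ n ω) := enorm_nonneg' _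
  have hγn := hγpos n
  have hγn1 := hγpos (n + 1)
  have hMn := hMγ n
  nlinarith [mul_le_mul_of_nonneg_left hb1 (le_of_lt hγn1),
    mul_nonneg (mul_nonneg (le_of_lt hγn) hs) (add_nonneg ha hb),
    mul_le_mul_of_nonneg_right hMn (mul_nonneg hs (add_nonneg ha hb)),
    mul_le_mul_of_nonneg_right hMn (add_nonneg ha hb),
    mul_nonneg (le_of_lt hγn1) ha, mul_nonneg (le_of_lt hγn1) hb]

end DistSA
end
end

section
/- Let μ be a probability measure on ℝ^{dN} × M₁ with ∫ |y|² dμ(y,w) < ∞ such that, for μ-almost every (y,w), the matrix w is doubly stochastic (w𝟏 = 𝟏 and wᵀ𝟏 = 𝟏). Define W̄ := ∫ (w ⊗ I_d) dμ, z := ∫ (w ⊗ I_d) y dμ, and assume ‖𝒥⊥W̄‖ < 1. Set R(w) := (w ⊗ I_d) − W̄, υ(y,w) := (w ⊗ I_d) y − z, A := ((𝟏ᵀ/N) ⊗ I_d)(I_{dN} + W̄ (I_{dN} − 𝒥⊥W̄)^{−1} 𝒥⊥), ξ_x(y,w) := A (R(w) x + υ(y,w)), Ξ(x) := ∫ ξ_x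 ξ_xᵀ dμ, and let π be any probability measure on ℝ^{dN} with finite second moment. Then A = (𝟏ᵀ/N) ⊗ I_d, A R(w) = 0 for μ-almost every (y,w), and consequently U := ∫ Ξ(x) dπ(x) = ∫ ⟨y − ȳ⟩⟨y − ȳ⟩ᵀ dμ(y,w), where ȳ := ∫ y dμ(y,w). -/
open MeasureTheory ProbabilityTheory Filter Matrix Set
open scoped Kronecker Topology ENNReal NNReal

noncomputable section

namespace DistSA

variable (N d : ℕ)

/-- `(𝟏ᵀ/N) ⊗ I_d`, the averaging matrix `ℝ^{dN} → ℝ^d`. -/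
def avgMat : Matrix (Fin d) (Fin N × Fin d) ℝ :=
  Matrix.of fun j q => if q.2 = j then (N : ℝ)⁻¹ else 0

/-! ### Auxiliary lemmas -/


lemma avgMat_mulVec (v : EVec N d) : (avgMat N d).mulVec v = avg N d v := by
  funext j
  simp only [Matrix.mulVec, dotProduct, avgMat, avg, Matrix.of_apply,
    Fintype.sum_prod_type, ite_mul, zero_mul, Finset.sum_ite_eq' Finset.univ j,
    Finset.mem_univ, if_true, Finset.mul_sum]

lemma Kro_mulVec (w : Matrix (Fin N) (Fin N) ℝ) (y : EVec N d) (i : Fin N) (j : Fin d) :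
    (Kro N d w).mulVec y (i, j) = ∑ k, w i k * y (k, j) := by
  simp only [Matrix.mulVec, dotProduct, Kro, Matrix.kroneckerMap_apply,
    Fintype.sum_prod_type, Matrix.one_apply, mul_ite, mul_one, mul_zero, ite_mul, zero_mul,
    Finset.sum_ite_eq Finset.univ j, Finset.mem_univ, if_true]

lemma avgMat_mul_Kro (w : Matrix (Fin N) (Fin N) ℝ) (hw : ∀ j, ∑ i, w i j = 1) :
    avgMat N d * Kro N d w = avgMat N d := by
  ext j ⟨k, l⟩
  simp only [Matrix.mul_apply, avgMat, Kro, Matrix.of_apply, Matrix.kroneckerMap_apply,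
    Fintype.sum_prod_type, Matrix.one_apply, ite_mul, zero_mul, mul_ite, mul_one, mul_zero]
  by_cases h : l = j
  · subst h
    simp only [Finset.sum_ite_eq' Finset.univ l, Finset.mem_univ, if_true, if_pos rfl]
    rw [← Finset.mul_sum, hw k, mul_one]
  · simp [Finset.sum_ite_eq', h, Ne.symm h]

lemma Jperpb_eq : Jperpb N d = 1 - Jb N d := by
  ext ⟨i, j⟩ ⟨k, l⟩
  simp [Jperpb, Jperp, Kro, Jb, Jmat, Matrix.one_apply, Matrix.sub_apply, Prod.ext_iff]
  split_ifs <;> simp_all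

lemma avgMat_mul_Jperpb (hN : 0 < N) : avgMat N d * Jperpb N d = 0 := by
  rw [Jperpb_eq, Matrix.mul_sub, Matrix.mul_one]
  rw [show Jb N d = Kro N d (Jmat N) from rfl, avgMat_mul_Kro N d _ (fun j => ?_), sub_self]
  simp only [Jmat, Matrix.of_apply, Finset.sum_const, Finset.card_univ, Fintype.card_fin,
    nsmul_eq_mul]
  field_simp

lemma avg_sub (u v : EVec N d) (j : Fin d) :
    avg N d (u - v) j = avg N d u j - avg N d v j := by
  simp [avg, Finset.sum_sub_distrib, mul_sub]


/-- For doubly stochastic communication protocols, `A = (𝟏ᵀ/N) ⊗ I_d`,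
`A R(w) = 0` μ-a.e., and the asymptotic covariance reduces to the centralized one:
`U = ∫ ⟨y − ȳ⟩⟨y − ȳ⟩ᵀ dμ`. -/
theorem doubly_stochastic_covariance
    (hN : 0 < N) (hd : 0 < d)
    (μ : Measure (EVec N d × Matrix (Fin N) (Fin N) ℝ)) [IsProbabilityMeasure μ]
    (hM1 : ∀ᵐ p ∂μ, RowStochastic N p.2)
    (hDS : ∀ᵐ p ∂μ, ∀ j, ∑ i, p.2 i j = 1)
    (hmom2 : ∫⁻ p, ENNReal.ofReal (enorm p.1 ^ 2) ∂μ < ⊤)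
    (Wbar : Matrix (Fin N × Fin d) (Fin N × Fin d) ℝ)
    (hWbar : Wbar = Matrix.of fun a b => ∫ p, Kro N d p.2 a b ∂μ)
    (z : EVec N d) (hz : z = fun a => ∫ p, (Kro N d p.2).mulVec p.1 a ∂μ)
    (hWnorm : specNorm (Jperpb N d * Wbar) < 1)
    (R : Matrix (Fin N) (Fin N) ℝ → Matrix (Fin N × Fin d) (Fin N × Fin d) ℝ)
    (hR : R = fun w => Kro N d w - Wbar)
    (υ : EVec N d × Matrix (Fin N) (Fin N) ℝ → EVec N d)
    (hυ : υ = fun p => (Kro N d p.2).mulVec p.1 - z)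
    (Astar : Matrix (Fin d) (Fin N × Fin d) ℝ)
    (hAstar : Astar = avgMat N d *
      (1 + Wbar * ((1 : Matrix (Fin N × Fin d) (Fin N × Fin d) ℝ)
          - Jperpb N d * Wbar)⁻¹ * Jperpb N d))
    (ξ : EVec N d → EVec N d × Matrix (Fin N) (Fin N) ℝ → Fin d → ℝ)
    (hξ : ξ = fun x p => Astar.mulVec ((R p.2).mulVec x + υ p))
    (Ξ : EVec N d → Matrix (Fin d) (Fin d) ℝ)
    (hΞ : Ξ = fun x => Matrix.of fun j k => ∫ p, ξ x p j * ξ x p k ∂μ)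
    (π : Measure (EVec N d)) [IsProbabilityMeasure π]
    (hπmom2 : ∫⁻ x, ENNReal.ofReal (enorm x ^ 2) ∂π < ⊤)
    (ybar : EVec N d) (hybar : ybar = fun a => ∫ p, p.1 a ∂μ) :
    Astar = avgMat N d ∧
      (∀ᵐ p ∂μ, Astar * R p.2 = 0) ∧
      (Matrix.of fun j k => ∫ x, Ξ x j k ∂π) =
        Matrix.of (fun j k => ∫ p, avg N d (p.1 - ybar) j * avg N d (p.1 - ybar) k ∂μ) := by
  -- basic estimates
  have habs : ∀ t : ℝ, |t| ≤ 1 + t ^ 2 := fun t => by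
    nlinarith [sq_abs t, sq_nonneg (|t| - 1)]
  have hsq : ∀ y : EVec N d, enorm y ^ 2 = ∑ i, (y i) ^ 2 := fun y =>
    Real.sq_sqrt (by positivity)
  have hen : ∀ (y : EVec N d) (a), |y a| ≤ 1 + enorm y ^ 2 := by
    intro y a
    have h1 : (y a) ^ 2 ≤ ∑ i, (y i) ^ 2 :=
      Finset.single_le_sum (fun i _ => sq_nonneg (y i)) (Finset.mem_univ a)
    have := habs (y a)
    rw [hsq y]; linarith
  -- measurability of coordinates
  have measY : ∀ a, Measurable (fun p : EVec N d × Matrix (Fin N) (Fin N) ℝ => p.1 a) :=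
    fun a => (measurable_pi_apply a).comp measurable_fst
  have measW : ∀ i k, Measurable (fun p : EVec N d × Matrix (Fin N) (Fin N) ℝ => p.2 i k) :=
    fun i k => (measurable_pi_apply k).comp ((measurable_pi_apply i).comp measurable_snd)
  -- integrability facts
  have intG : Integrable (fun p : EVec N d × Matrix (Fin N) (Fin N) ℝ => enorm p.1 ^ 2) μ := by
    have hm : Measurable (fun p : EVec N d × Matrix (Fin N) (Fin N) ℝ => enorm p.1 ^ 2) := by
      simp only [hsq]
      exact Finset.measurable_sum _ fun i _ => (measY i).pow_const 2
    refine ⟨hm.aestronglyMeasurable, ?_⟩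
    rw [hasFiniteIntegral_iff_ofReal (Eventually.of_forall fun p => by positivity)]
    exact hmom2
  have intOne : Integrable (fun p : EVec N d × Matrix (Fin N) (Fin N) ℝ =>
      1 + enorm p.1 ^ 2) μ := (integrable_const 1).add intG
  have intY : ∀ a, Integrable (fun p : EVec N d × Matrix (Fin N) (Fin N) ℝ => p.1 a) μ := by
    intro a
    refine intOne.mono' (measY a).aestronglyMeasurable (Eventually.of_forall fun p => ?_)
    rw [Real.norm_eq_abs]; exact hen p.1 a
  have hwle : ∀ᵐ p ∂μ, ∀ i k, |p.2 i k| ≤ 1 := by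
    filter_upwards [hM1] with p hp
    intro i k
    rw [abs_of_nonneg (hp.1 i k)]
    calc p.2 i k ≤ ∑ j, p.2 i j :=
          Finset.single_le_sum (fun j _ => hp.1 i j) (Finset.mem_univ k)
      _ = 1 := hp.2 i
  have intKro : ∀ a b, Integrable
      (fun p : EVec N d × Matrix (Fin N) (Fin N) ℝ => Kro N d p.2 a b) μ := by
    intro a b
    have hm : Measurable (fun p : EVec N d × Matrix (Fin N) (Fin N) ℝ => Kro N d p.2 a b) := by
      show Measurable fun p : EVec N d × Matrix (Fin N) (Fin N) ℝ =>
        p.2 a.1 b.1 * (1 : Matrix (Fin d) (Fin d) ℝ) a.2 b.2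
      exact (measW a.1 b.1).mul_const _
    refine (integrable_const (1 : ℝ)).mono' hm.aestronglyMeasurable ?_
    filter_upwards [hwle] with p hp
    rw [Real.norm_eq_abs]
    show |p.2 a.1 b.1 * (1 : Matrix (Fin d) (Fin d) ℝ) a.2 b.2| ≤ 1
    rw [abs_mul]
    calc |p.2 a.1 b.1| * |(1 : Matrix (Fin d) (Fin d) ℝ) a.2 b.2| ≤ 1 * 1 := by
          refine mul_le_mul (hp a.1 b.1) ?_ (abs_nonneg _) zero_le_one
          by_cases h : a.2 = b.2 <;> simp [Matrix.one_apply, h]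
      _ = 1 := mul_one 1
  have intF : ∀ i j, Integrable
      (fun p : EVec N d × Matrix (Fin N) (Fin N) ℝ => ∑ k, p.2 i k * p.1 (k, j)) μ := by
    intro i j
    have hm : Measurable
        (fun p : EVec N d × Matrix (Fin N) (Fin N) ℝ => ∑ k, p.2 i k * p.1 (k, j)) :=
      Finset.measurable_sum _ fun k _ => (measW i k).mul (measY (k, j))
    refine (intOne.const_mul (N : ℝ)).mono' hm.aestronglyMeasurable ?_
    filter_upwards [hwle] with p hp
    rw [Real.norm_eq_abs]
    calc |∑ k, p.2 i k * p.1 (k, j)| ≤ ∑ k, |p.2 i k * p.1 (k, j)| :=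
          Finset.abs_sum_le_sum_abs _ _
      _ ≤ ∑ _k : Fin N, (1 + enorm p.1 ^ 2) := by
          refine Finset.sum_le_sum fun k _ => ?_
          rw [abs_mul]
          calc |p.2 i k| * |p.1 (k, j)| ≤ 1 * (1 + enorm p.1 ^ 2) :=
                mul_le_mul (hp i k) (hen p.1 (k, j)) (abs_nonneg _)
                  (by positivity)
            _ = 1 + enorm p.1 ^ 2 := one_mul _
      _ = (N : ℝ) * (1 + enorm p.1 ^ 2) := by
          rw [Finset.sum_const, Finset.card_univ, Fintype.card_fin, nsmul_eq_mul]
  -- column sums of Wbar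
  have hWcol : avgMat N d * Wbar = avgMat N d := by
    ext j q
    rw [Matrix.mul_apply]
    have h1 : ∀ a, avgMat N d j a * Wbar a q =
        ∫ p, avgMat N d j a * Kro N d p.2 a q ∂μ := by
      intro a
      rw [hWbar]
      simp only [Matrix.of_apply]
      exact (integral_const_mul _ _).symm
    simp_rw [h1]
    rw [← integral_finset_sum _ (fun a _ => (intKro a q).const_mul _)]
    have h2 : ∀ᵐ p ∂μ, (∑ a, avgMat N d j a * Kro N d p.2 a q) = avgMat N d j q := by
      filter_upwards [hDS] with p hp
      have h3 := congrFun (congrFun (avgMat_mul_Kro N d p.2 hp) j) q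
      rw [← h3, Matrix.mul_apply]
    rw [integral_congr_ae h2, integral_const]
    simp [measure_univ]
  have hJp0 := avgMat_mul_Jperpb N d hN
  -- Part 1
  have key : avgMat N d * (Wbar * ((1 : Matrix (Fin N × Fin d) (Fin N × Fin d) ℝ)
      - Jperpb N d * Wbar)⁻¹ * Jperpb N d) = 0 := by
    set C := (1 : Matrix (Fin N × Fin d) (Fin N × Fin d) ℝ) - Jperpb N d * Wbar with hC
    by_cases hu : IsUnit C.det
    · have h1 : avgMat N d * C = avgMat N d := by
        rw [hC, Matrix.mul_sub, Matrix.mul_one, ← Matrix.mul_assoc, hJp0, Matrix.zero_mul,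
          sub_zero]
      have h2 : avgMat N d * C⁻¹ = avgMat N d := by
        conv_lhs => rw [← h1]
        rw [Matrix.mul_assoc, Matrix.mul_nonsing_inv _ hu, Matrix.mul_one]
      calc avgMat N d * (Wbar * C⁻¹ * Jperpb N d)
          = avgMat N d * Wbar * C⁻¹ * Jperpb N d := by
            rw [← Matrix.mul_assoc, ← Matrix.mul_assoc]
        _ = avgMat N d * C⁻¹ * Jperpb N d := by rw [hWcol]
        _ = avgMat N d * Jperpb N d := by rw [h2]
        _ = 0 := hJp0
    · rw [Matrix.nonsing_inv_apply_not_isUnit _ hu, Matrix.mul_zero, Matrix.zero_mul,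
        Matrix.mul_zero]
  have hA : Astar = avgMat N d := by
    rw [hAstar, Matrix.mul_add, Matrix.mul_one, key, add_zero]
  -- Part 2
  have hAR : ∀ᵐ p ∂μ, Astar * R p.2 = 0 := by
    filter_upwards [hDS] with p hp
    rw [hA, hR]
    show avgMat N d * (Kro N d p.2 - Wbar) = 0
    rw [Matrix.mul_sub, avgMat_mul_Kro N d p.2 hp, hWcol, sub_self]
  -- avg z = avg ybar
  have havgz : ∀ j, avg N d z j = avg N d ybar j := by
    intro j
    have hzi : ∀ i, z (i, j) = ∫ p, ∑ k, p.2 i k * p.1 (k, j) ∂μ := by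
      intro i
      rw [hz]
      exact integral_congr_ae (Eventually.of_forall fun p => Kro_mulVec N d p.2 p.1 i j)
    have hsum : ∑ i, z (i, j) = ∑ i, ybar (i, j) := by
      calc ∑ i, z (i, j) = ∑ i, ∫ p, ∑ k, p.2 i k * p.1 (k, j) ∂μ := by simp_rw [hzi]
        _ = ∫ p, ∑ i, ∑ k, p.2 i k * p.1 (k, j) ∂μ :=
            (integral_finset_sum _ fun i _ => intF i j).symm
        _ = ∫ p, ∑ k, p.1 (k, j) ∂μ := by
            refine integral_congr_ae ?_
            filter_upwards [hDS] with p hp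
            rw [Finset.sum_comm]
            refine Finset.sum_congr rfl fun k _ => ?_
            rw [← Finset.sum_mul, hp k, one_mul]
        _ = ∑ k, ∫ p, p.1 (k, j) ∂μ := integral_finset_sum _ fun k _ => intY (k, j)
        _ = ∑ i, ybar (i, j) := by rw [hybar]
    simp only [avg, hsum]
  -- a.e. formula for ξ, independent of x
  have hxi : ∀ x : EVec N d, ∀ᵐ p ∂μ, ∀ j, ξ x p j = avg N d (p.1 - ybar) j := by
    intro x
    filter_upwards [hAR, hDS] with p h1 h2
    intro j
    rw [hξ]
    show (Astar.mulVec ((R p.2).mulVec x + υ p)) j = _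
    rw [Matrix.mulVec_add, Matrix.mulVec_mulVec, h1, Matrix.zero_mulVec, hυ]
    show (0 + Astar.mulVec ((Kro N d p.2).mulVec p.1 - z)) j = _
    rw [Matrix.mulVec_sub, Matrix.mulVec_mulVec, hA, avgMat_mul_Kro N d p.2 h2,
      avgMat_mulVec, avgMat_mulVec]
    simp only [Pi.add_apply, Pi.sub_apply, Pi.zero_apply, zero_add]
    rw [havgz j, avg_sub]
  -- Ξ is constant
  have hΞc : ∀ x j k, Ξ x j k =
      ∫ p, avg N d (p.1 - ybar) j * avg N d (p.1 - ybar) k ∂μ := by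
    intro x j k
    rw [hΞ]
    show (∫ p, ξ x p j * ξ x p k ∂μ) = _
    refine integral_congr_ae ?_
    filter_upwards [hxi x] with p hp
    rw [hp j, hp k]
  refine ⟨hA, hAR, ?_⟩
  ext j k
  show (∫ x, Ξ x j k ∂π) = _
  calc (∫ x, Ξ x j k ∂π)
      = ∫ _x, (∫ p, avg N d (p.1 - ybar) j * avg N d (p.1 - ybar) k ∂μ) ∂π :=
        integral_congr_ae (Eventually.of_forall fun x => hΞc x j k)
    _ = _ := by rw [integral_const]; simp [measure_univ]


end DistSA
end
end
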